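/- arXiv:2507.19274 — 3 statements merged into one kernel-verified Lean document; each statement's English description precedes it below -/
import Mathlib

section
/- Let s, n ≥ 2 with s | n, let G = ℤ/nℤ, and let ρ(k) be the diagonal unitary representation with ρ(k)x = (x_l e^{2πilk/n})_l. Set Ω = {k ∈ {1,…,n} : k ≢ 0 mod s}. Then for every vector ξ ∈ ℂⁿ there exists a nonzero s-sparse vector x ∈ ℂⁿ with ⟨x, ρ(k)ξ⟩ = 0 for all k ∈ Ω. Consequently the measurement map x ↦ (⟨x, ρ(k)ξ⟩)_{k∈Ω} fails to be injective on s-sparse vectors, even though |Ω| = n − n/s. -/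
/-- Let `s, n ≥ 2` with `s ∣ n`, `G = ℤ/nℤ`, and let `ρ(k)` act diagonally by
`(ρ(k)x)_l = x_l e^{2πilk/n}`.  With `Ω = {k : k ≢ 0 mod s}` (indices `1,…,n` realized as
`k.1 + 1`), for every `ξ ∈ ℂⁿ` there is a nonzero `s`-sparse `x` with `⟨x, ρ(k)ξ⟩ = 0` for
all `k ∈ Ω`; in particular the measurement map fails to be injective on `s`-sparse vectors. -/
theorem stmt_6 {s n : ℕ} (hs : 2 ≤ s) (hn : 2 ≤ n) (hdvd : s ∣ n) (ξ : Fin n → ℂ) :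
    ∃ x : Fin n → ℂ, x ≠ 0 ∧
      (Finset.univ.filter (fun j => x j ≠ 0)).card ≤ s ∧
      ∀ k : Fin n, (k.1 + 1) % s ≠ 0 →
        ∑ l, x l * (starRingEnd ℂ)
            (ξ l * Complex.exp (2 * Real.pi * Complex.I * (l.1 + 1) * (k.1 + 1) / n)) = 0 := by
  by_cases hξ : ∃ j, ξ j = 0
  · obtain ⟨j, hj⟩ := hξ
    refine ⟨fun l => if l = j then 1 else 0, ?_, ?_, ?_⟩
    · intro h
      have := congrFun h j
      simp at this
    · have hsub : (Finset.univ.filter fun l : Fin n =>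
          (if l = j then (1:ℂ) else 0) ≠ 0) ⊆ {j} := by
        intro l hl
        simp only [Finset.mem_filter, ne_eq] at hl
        simp only [Finset.mem_singleton]
        by_contra h
        simp [h] at hl
      calc _ ≤ ({j} : Finset (Fin n)).card := Finset.card_le_card hsub
        _ ≤ s := by simp; omega
    · intro k hk
      rw [Finset.sum_eq_single j]
      · simp [hj]
      · intro b _ hb; simp [hb]
      · simp
  · push_neg at hξ
    have hn0 : 0 < n := by omega
    have hs0 : 0 < s := by omega
    set m := n / s with hm
    have hms : m * s = n := Nat.div_mul_cancel hdvd
    have hm0 : 0 < m := Nat.div_pos (Nat.le_of_dvd hn0 hdvd) hs0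
    set x : Fin n → ℂ := fun l => if (l.1 + 1) % m = 0 then ((starRingEnd ℂ) (ξ l))⁻¹ else 0
      with hx
    -- the injection from Fin s onto the support
    have hglt : ∀ t : Fin s, t.1 * m + (m - 1) < n := by
      intro t
      have h1 : t.1 + 1 ≤ s := t.2
      have h2 : (t.1 + 1) * m ≤ s * m := Nat.mul_le_mul_right m h1
      have : s * m = n := by rw [Nat.mul_comm]; exact hms
      have h3 : t.1 * m + m ≤ n := by rw [← this]; calc t.1*m + m = (t.1+1)*m := by ring
                                                      _ ≤ s * m := h2
      omega
    set g : Fin s → Fin n := fun t => ⟨t.1 * m + (m - 1), hglt t⟩ with hg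
    have hgval : ∀ t : Fin s, (g t).1 + 1 = (t.1 + 1) * m := by
      intro t
      simp only [hg]
      rw [add_one_mul]
      omega
    have hgmod : ∀ t : Fin s, ((g t).1 + 1) % m = 0 := by
      intro t
      rw [hgval t, Nat.mul_mod_left]
    have himage : (Finset.univ.filter fun l : Fin n => (l.1 + 1) % m = 0)
        = Finset.image g Finset.univ := by
      ext a
      simp only [Finset.mem_filter, Finset.mem_image, Finset.mem_univ, true_and]
      constructor
      · intro ha
        obtain ⟨p, hp⟩ := Nat.dvd_of_mod_eq_zero ha
        have hp1 : 1 ≤ p := by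
          rcases Nat.eq_zero_or_pos p with h | h
          · simp [h] at hp
          · exact h
        have hps : p ≤ s := by
          have : m * p ≤ m * s := by
            rw [← hp]; have := a.2; omega
          exact Nat.le_of_mul_le_mul_left this hm0
        obtain ⟨p', rfl⟩ : ∃ p', p = p' + 1 := ⟨p - 1, by omega⟩
        refine ⟨⟨p', by omega⟩, ?_⟩
        have h1 : m * (p' + 1) = m * p' + m := by ring
        have h3 : p' * m = m * p' := Nat.mul_comm _ _
        have hval : p' * m + (m - 1) = a.1 := by omega
        exact Fin.ext hval
      · rintro ⟨t, rfl⟩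
        exact hgmod t
    have hginj : Function.Injective g := by
      intro a b hab
      have : a.1 * m + (m - 1) = b.1 * m + (m - 1) := congrArg Fin.val hab
      have h2 : a.1 * m = b.1 * m := by omega
      have := Nat.eq_of_mul_eq_mul_right hm0 h2
      exact Fin.ext this
    refine ⟨x, ?_, ?_, ?_⟩
    · intro h
      have hlt : m - 1 < n := by
        have := hglt ⟨0, by omega⟩
        simpa using this
      have := congrFun h ⟨m - 1, hlt⟩
      have hmod : (m - 1 + 1) % m = 0 := by
        have h1 : m - 1 + 1 = m := by omega
        simp [h1]
      simp only [hx, hmod, if_true, Pi.zero_apply] at this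
      exact hξ _ (by simpa using this)
    · have hsub : (Finset.univ.filter fun l : Fin n => x l ≠ 0) ⊆
          Finset.univ.filter fun l : Fin n => (l.1 + 1) % m = 0 := by
        intro l hl
        simp only [Finset.mem_filter, ne_eq, hx] at hl ⊢
        refine ⟨Finset.mem_univ _, ?_⟩
        by_contra h
        simp [h] at hl
      calc _ ≤ _ := Finset.card_le_card hsub
        _ = (Finset.image g Finset.univ).card := by rw [himage]
        _ ≤ (Finset.univ : Finset (Fin s)).card := Finset.card_image_le
        _ = s := by simp
    · intro k hk
      have hsC : (s : ℂ) ≠ 0 := Nat.cast_ne_zero.mpr (by omega)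
      have hnC : (n : ℂ) ≠ 0 := Nat.cast_ne_zero.mpr (by omega)
      have hnms : (n : ℂ) = (m : ℂ) * s := by exact_mod_cast hms.symm
      set ω : ℂ := Complex.exp (-(2 * Real.pi * Complex.I * (k.1 + 1) / s)) with hω
      -- step A: reduce the sum
      have hA : ∑ l, x l * (starRingEnd ℂ)
            (ξ l * Complex.exp (2 * Real.pi * Complex.I * (l.1 + 1) * (k.1 + 1) / n))
          = ∑ t ∈ Finset.range s, ω ^ (t + 1) := by
        rw [← Finset.sum_filter_of_ne (p := fun l : Fin n => (l.1 + 1) % m = 0)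
          (by
            intro l _ hne
            by_contra h
            simp only [hx, h, if_false, zero_mul] at hne
            exact hne rfl)]
        rw [himage, Finset.sum_image (fun a _ b _ h => hginj h)]
        rw [← Fin.sum_univ_eq_sum_range (fun t => ω ^ (t + 1)) s]
        refine Finset.sum_congr rfl ?_
        intro t _
        have hxg : x (g t) = ((starRingEnd ℂ) (ξ (g t)))⁻¹ := by
          simp only [hx, hgmod t, if_true]
        rw [hxg, map_mul, ← mul_assoc, inv_mul_cancel₀ (by
          intro h0
          exact hξ (g t) (by simpa using congrArg (starRingEnd ℂ) h0)), one_mul]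
        rw [← Complex.exp_conj]
        have hconj : (starRingEnd ℂ)
            (2 * Real.pi * Complex.I * ((g t).1 + 1) * (k.1 + 1) / n)
            = -(2 * Real.pi * Complex.I * ((g t).1 + 1) * (k.1 + 1) / n) := by
          simp [map_div₀, map_mul, Complex.conj_I, map_ofNat, Complex.conj_natCast,
            Complex.conj_ofReal]
          ring
        rw [hconj]
        have hgcast : (((g t).1 : ℂ) + 1) = ((t.1 : ℂ) + 1) * m := by
          have := congrArg (fun q : ℕ => (q : ℂ)) (hgval t)
          push_cast at this
          simpa using this
        rw [show ω ^ (t.1 + 1) = Complex.exp (((t.1 : ℂ) + 1) *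
            (-(2 * Real.pi * Complex.I * (k.1 + 1) / s))) by
          rw [hω, ← Complex.exp_nat_mul]
          congr 1
          push_cast
          ring]
        congr 1
        rw [hgcast, hnms]
        have hmC : (m : ℂ) ≠ 0 := Nat.cast_ne_zero.mpr (by omega)
        field_simp
      rw [hA]
      -- step B: geometric series vanishes
      have hωs : ω ^ s = 1 := by
        rw [hω, ← Complex.exp_nat_mul]
        have : (s : ℂ) * -(2 * Real.pi * Complex.I * (k.1 + 1) / s)
            = ((-(k.1 + 1) : ℤ) : ℂ) * (2 * Real.pi * Complex.I) := by
          push_cast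
          field_simp
        rw [this]
        exact Complex.exp_int_mul_two_pi_mul_I _
      have hω1 : ω ≠ 1 := by
        intro h
        rw [hω, Complex.exp_eq_one_iff] at h
        obtain ⟨j, hj⟩ := h
        have h2 : (2 * (Real.pi : ℂ) * Complex.I) ≠ 0 := by
          simp [Real.pi_ne_zero, Complex.I_ne_zero, Complex.ofReal_ne_zero]
        have h4 : (2 * (Real.pi : ℂ) * Complex.I) * ((k.1 : ℂ) + 1)
            = (2 * (Real.pi : ℂ) * Complex.I) * (((-j : ℤ) : ℂ) * s) := by
          have h5 := congrArg (fun z : ℂ => z * (-(s : ℂ))) hj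
          field_simp at h5
          push_cast
          linear_combination (2 * (Real.pi : ℂ) * Complex.I) * h5
        have h6 : ((k.1 : ℂ) + 1) = ((-j : ℤ) : ℂ) * s := mul_left_cancel₀ h2 h4
        have h7 : ((k.1 + 1 : ℕ) : ℤ) = (-j) * s := by exact_mod_cast h6
        have h8 : (s : ℤ) ∣ ((k.1 + 1 : ℕ) : ℤ) := ⟨-j, by linarith [h7]⟩
        have h9 : s ∣ (k.1 + 1) := by exact_mod_cast h8
        exact hk (Nat.eq_zero_of_dvd_of_lt h9 |> fun _ => (Nat.mod_eq_zero_of_dvd h9))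
      calc ∑ t ∈ Finset.range s, ω ^ (t + 1)
          = ω * ∑ t ∈ Finset.range s, ω ^ t := by
            rw [Finset.mul_sum]
            refine Finset.sum_congr rfl ?_
            intro t _
            ring
        _ = ω * ((ω ^ s - 1) / (ω - 1)) := by rw [geom_sum_eq hω1]
        _ = 0 := by rw [hωs]; simp
end

section
/- Let G be a finite group, H a normal subgroup, and σ : H → U(k) a unitary representation. Let π_σ be the induced representation Ind_H^G σ realized on ℂ^{k·|H\G|} via a cross-section γ : H\G → G, acting by (π_σ(g)f)(υ) = σ(γ(υ)g·γ(υg)⁻¹) f(υg) for f : H\G → ℂ^k. Let Ω ⊆ G be a set whose elements lie in pairwise distinct right cosets of H. Then for every y and every standard basis vector e_j, Σ_{g∈Ω} |⟨e_j, π_σ(g)y⟩|² ≤ ‖y‖₂². -/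
open Matrix

lemma unitary_mulVec_norm_sq {k : ℕ} (U : Matrix.unitaryGroup (Fin k) ℂ) (v : Fin k → ℂ) :
    ∑ j, ‖((U : Matrix (Fin k) (Fin k) ℂ).mulVec v) j‖ ^ 2
      = ∑ i, ‖v i‖ ^ 2 := by
  have key : star ((U : Matrix (Fin k) (Fin k) ℂ).mulVec v) ⬝ᵥ
      ((U : Matrix (Fin k) (Fin k) ℂ).mulVec v) = star v ⬝ᵥ v := by
    rw [Matrix.star_mulVec, Matrix.dotProduct_mulVec, Matrix.vecMul_vecMul]
    have : (U : Matrix (Fin k) (Fin k) ℂ)ᴴ * (U : Matrix (Fin k) (Fin k) ℂ) = 1 := by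
      have := U.2.1
      simpa [Matrix.star_eq_conjTranspose] using this
    rw [this, Matrix.vecMul_one]
  have h1 : ∀ (w : Fin k → ℂ), (star w ⬝ᵥ w).re = ∑ i, ‖w i‖ ^ 2 := by
    intro w
    simp only [dotProduct, Complex.re_sum, Pi.star_apply, Complex.star_def]
    refine Finset.sum_congr rfl fun i _ => ?_
    rw [← Complex.normSq_eq_norm_sq, ← Complex.normSq_eq_conj_mul_self]
    simp
  have := congrArg Complex.re key
  rwa [h1, h1] at this

theorem stmt_12 {G : Type*} [Group G] [Fintype G] (H : Subgroup G) (hH : H.Normal)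
    [Fintype (Quotient (QuotientGroup.rightRel H))]
    {k : ℕ} (σ : H →* Matrix.unitaryGroup (Fin k) ℂ)
    (γ : Quotient (QuotientGroup.rightRel H) → G)
    (hγ : ∀ υ, Quotient.mk (QuotientGroup.rightRel H) (γ υ) = υ)
    (hmem : ∀ (υ : Quotient (QuotientGroup.rightRel H)) (g : G),
      γ υ * g * (γ (Quotient.mk (QuotientGroup.rightRel H) (γ υ * g)))⁻¹ ∈ H)
    (Ω : Finset G) (hΩ : ∀ a ∈ Ω, ∀ b ∈ Ω, a ≠ b → a * b⁻¹ ∉ H)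
    (y : Quotient (QuotientGroup.rightRel H) → Fin k → ℂ)
    (υ₀ : Quotient (QuotientGroup.rightRel H)) (j₀ : Fin k) :
    ∑ g ∈ Ω, ‖
        ((σ ⟨γ υ₀ * g * (γ (Quotient.mk (QuotientGroup.rightRel H) (γ υ₀ * g)))⁻¹,
              hmem υ₀ g⟩ : Matrix (Fin k) (Fin k) ℂ).mulVec
            (y (Quotient.mk (QuotientGroup.rightRel H) (γ υ₀ * g)))) j₀‖ ^ 2
      ≤ ∑ υ, ∑ i, ‖y υ i‖ ^ 2 := by
  classical
  set c : G → Quotient (QuotientGroup.rightRel H) :=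
    fun g => Quotient.mk (QuotientGroup.rightRel H) (γ υ₀ * g) with hc
  -- each term bounded by full norm at coset c g
  have hterm : ∀ g ∈ Ω, ‖
        ((σ ⟨γ υ₀ * g * (γ (c g))⁻¹, hmem υ₀ g⟩ : Matrix (Fin k) (Fin k) ℂ).mulVec
            (y (c g))) j₀‖ ^ 2 ≤ ∑ i, ‖y (c g) i‖ ^ 2 := by
    intro g _
    refine le_trans (Finset.single_le_sum
      (f := fun j => ‖
        ((σ ⟨γ υ₀ * g * (γ (c g))⁻¹, hmem υ₀ g⟩ : Matrix (Fin k) (Fin k) ℂ).mulVec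
            (y (c g))) j‖ ^ 2)
      (fun i _ => by positivity) (Finset.mem_univ j₀)) ?_
    exact le_of_eq (unitary_mulVec_norm_sq _ _)
  -- c is injective on Ω
  have hinj : Set.InjOn c Ω := by
    intro a ha b hb hab
    by_contra hne
    apply hΩ b hb a ha (Ne.symm hne)
    have : QuotientGroup.rightRel H (γ υ₀ * a) (γ υ₀ * b) := Quotient.exact hab
    rw [QuotientGroup.rightRel_apply] at this
    have h2 : γ υ₀ * b * (γ υ₀ * a)⁻¹ ∈ H := this
    have h3 : γ υ₀ * (b * a⁻¹) * (γ υ₀)⁻¹ ∈ H := by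
      have : γ υ₀ * b * (γ υ₀ * a)⁻¹ = γ υ₀ * (b * a⁻¹) * (γ υ₀)⁻¹ := by group
      rwa [this] at h2
    have := hH.conj_mem _ h3 (γ υ₀)⁻¹
    simpa [mul_assoc] using this
  have h4 : ∑ g ∈ Ω, ∑ i, ‖y (c g) i‖ ^ 2
      = ∑ υ ∈ Ω.image c, ∑ i, ‖y υ i‖ ^ 2 :=
    (Finset.sum_image (f := fun υ => ∑ i, ‖y υ i‖ ^ 2) (fun a ha b hb h => hinj ha hb h)).symm
  refine le_trans (Finset.sum_le_sum hterm) ?_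
  rw [h4]
  exact Finset.sum_le_sum_of_subset_of_nonneg (Finset.subset_univ _)
    (fun _ _ _ => Finset.sum_nonneg fun _ _ => by positivity)
end

section
/- Let π : G → U(n) be a unitary subrepresentation of the left regular representation of a finite group G, given in block-diagonal form with irreducible blocks π_τ of dimensions d_{π_τ} and multiplicities m_π(π_τ). Let ξ ∈ ℂⁿ be the vector built blockwise from complex units ε_{τ,ι} ∈ 𝕋: for κ < m_π(π_τ), ξ^{τ,κ} = √(d_{π_τ})·ε_{τ,κ}·e_κ, and for κ = m_π(π_τ), ξ^{τ,κ} = √(d_{π_τ}/(d_{π_τ}−κ+1))·Σ_{ι=κ}^{d_{π_τ}} ε_{τ,ι}·e_ι. Then the rows of (1/√|G|)·(π(g)ξ)_{g∈G} ∈ ℂ^{n×|G|} are orthonormal; equivalently (1/|G|) Σ_{g∈G} (π(g)ξ)_k · conj((π(g)ξ)_j) = δ_{jk} for all 1 ≤ j, k ≤ n. -/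
open Matrix

/-- Schur's lemma: a self-intertwiner of an irreducible matrix rep is scalar. -/
private lemma schur_scalar {G : Type*} [Group G] {n : ℕ} (hn : 0 < n)
    (ρ : G →* Matrix.unitaryGroup (Fin n) ℂ)
    (hirr : ∀ U : Submodule ℂ (Fin n → ℂ),
      (∀ g, ∀ x ∈ U, ((ρ g : Matrix (Fin n) (Fin n) ℂ)).mulVec x ∈ U) → U = ⊥ ∨ U = ⊤)
    (M : Matrix (Fin n) (Fin n) ℂ)
    (hM : ∀ g, (ρ g : Matrix (Fin n) (Fin n) ℂ) * M = M * (ρ g : Matrix (Fin n) (Fin n) ℂ)) :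
    ∃ c : ℂ, M = c • 1 := by
  haveI : NeZero n := ⟨hn.ne'⟩
  obtain ⟨c, hc⟩ := Module.End.exists_eigenvalue (Matrix.mulVecLin M)
  obtain ⟨v, hv⟩ := hc.exists_hasEigenvector
  refine ⟨c, ?_⟩
  set U := Module.End.eigenspace (Matrix.mulVecLin M) c with hU
  have hinv : ∀ g, ∀ x ∈ U, ((ρ g : Matrix (Fin n) (Fin n) ℂ)).mulVec x ∈ U := by
    intro g x hx
    rw [hU, Module.End.mem_eigenspace_iff] at hx ⊢
    rw [Matrix.mulVecLin_apply] at hx ⊢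
    rw [Matrix.mulVec_mulVec, ← hM g, ← Matrix.mulVec_mulVec, hx, Matrix.mulVec_smul]
  rcases hirr U hinv with h | h
  · have hvU : v ∈ U := hv.1
    rw [h, Submodule.mem_bot] at hvU
    exact absurd hvU hv.2
  · ext i j
    have hj : (Pi.single j 1 : Fin n → ℂ) ∈ U := h ▸ Submodule.mem_top
    rw [hU, Module.End.mem_eigenspace_iff, Matrix.mulVecLin_apply, Matrix.mulVec_single] at hj
    have := congrFun hj i
    simp only [mul_one, Pi.smul_apply, Matrix.col_apply, MulOpposite.smul_eq_mul_unop, MulOpposite.unop_op] at this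
    rw [this]
    simp [Matrix.one_apply, Pi.single_apply, eq_comm, mul_comm]

private lemma avg_comm {G : Type*} [Group G] [Fintype G] {n m : ℕ}
    (ρ1 : G →* Matrix.unitaryGroup (Fin n) ℂ) (ρ2 : G →* Matrix.unitaryGroup (Fin m) ℂ)
    (E : Matrix (Fin n) (Fin m) ℂ) (h : G) :
    (ρ1 h : Matrix (Fin n) (Fin n) ℂ) *
      (∑ g : G, (ρ1 g : Matrix (Fin n) (Fin n) ℂ) * E * (ρ2 g⁻¹ : Matrix (Fin m) (Fin m) ℂ))
    = (∑ g : G, (ρ1 g : Matrix (Fin n) (Fin n) ℂ) * E * (ρ2 g⁻¹ : Matrix (Fin m) (Fin m) ℂ))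
      * (ρ2 h : Matrix (Fin m) (Fin m) ℂ) := by
  rw [Matrix.mul_sum, Matrix.sum_mul]
  refine Fintype.sum_equiv (Equiv.mulLeft h) _ _ fun g => ?_
  have h1 : (ρ1 (h * g) : Matrix (Fin n) (Fin n) ℂ)
      = (ρ1 h : Matrix (Fin n) (Fin n) ℂ) * (ρ1 g : Matrix (Fin n) (Fin n) ℂ) := by
    rw [_root_.map_mul]; rfl
  have h2 : (ρ2 (h * g)⁻¹ : Matrix (Fin m) (Fin m) ℂ)
      = (ρ2 g⁻¹ : Matrix (Fin m) (Fin m) ℂ) * (ρ2 h⁻¹ : Matrix (Fin m) (Fin m) ℂ) := by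
    rw [_root_.mul_inv_rev, _root_.map_mul]; rfl
  have h3 : (ρ2 h⁻¹ : Matrix (Fin m) (Fin m) ℂ) * (ρ2 h : Matrix (Fin m) (Fin m) ℂ) = 1 := by
    rw [← Matrix.UnitaryGroup.mul_val, ← _root_.map_mul, inv_mul_cancel, _root_.map_one]; rfl
  simp only [Equiv.coe_mulLeft, h1, h2, Matrix.mul_assoc, h3, Matrix.mul_one]

private lemma entry_helper {n m : ℕ} (A : Matrix (Fin n) (Fin n) ℂ) (B : Matrix (Fin m) (Fin m) ℂ)
    (i a : Fin n) (j b : Fin m) :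
    (A * Matrix.single i j (1:ℂ) * B) a b = A a i * B j b := by
  rw [Matrix.mul_assoc, Matrix.mul_apply]
  have : ∀ p, (Matrix.single i j (1:ℂ) * B) p b
      = if i = p then B j b else 0 := by
    intro p
    rw [Matrix.mul_apply]
    simp only [Matrix.single, Matrix.of_apply, ite_and, boole_mul, ite_mul, zero_mul]
    by_cases h : i = p <;> simp [h, Finset.sum_ite_eq]
  simp only [this, mul_ite, mul_zero, Finset.sum_ite_eq, Finset.mem_univ, if_true]

private lemma conj_entry {n : ℕ} {G : Type*} [Group G] (ρ : G →* Matrix.unitaryGroup (Fin n) ℂ)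
    (g : G) (b j : Fin n) :
    (starRingEnd ℂ) ((ρ g : Matrix (Fin n) (Fin n) ℂ) b j)
      = (ρ g⁻¹ : Matrix (Fin n) (Fin n) ℂ) j b := by
  rw [_root_.map_inv, Matrix.UnitaryGroup.inv_val, Matrix.star_apply]
  rfl

/-- Schur orthogonality, different blocks. -/
private lemma ortho_ne {G : Type*} [Group G] [Fintype G] {n m : ℕ}
    (ρ1 : G →* Matrix.unitaryGroup (Fin n) ℂ) (ρ2 : G →* Matrix.unitaryGroup (Fin m) ℂ)
    (hineq : ¬∃ M : Matrix (Fin n) (Fin m) ℂ, M ≠ 0 ∧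
      ∀ g, (ρ1 g : Matrix (Fin n) (Fin n) ℂ) * M = M * (ρ2 g : Matrix (Fin m) (Fin m) ℂ))
    (a i : Fin n) (b j : Fin m) :
    ∑ g : G, (ρ1 g : Matrix (Fin n) (Fin n) ℂ) a i
        * (ρ2 g⁻¹ : Matrix (Fin m) (Fin m) ℂ) j b = 0 := by
  set M : Matrix (Fin n) (Fin m) ℂ :=
    ∑ g : G, (ρ1 g : Matrix (Fin n) (Fin n) ℂ) * Matrix.single i j (1:ℂ)
      * (ρ2 g⁻¹ : Matrix (Fin m) (Fin m) ℂ) with hMdef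
  have hM0 : M = 0 := by
    by_contra hne
    exact hineq ⟨M, hne, fun h => avg_comm ρ1 ρ2 _ h⟩
  have : M a b = 0 := by rw [hM0]; rfl
  rw [hMdef, Matrix.sum_apply] at this
  simpa only [entry_helper] using this

/-- Schur orthogonality, same block. -/
private lemma ortho_eq {G : Type*} [Group G] [Fintype G] {n : ℕ} (hn : 0 < n)
    (ρ : G →* Matrix.unitaryGroup (Fin n) ℂ)
    (hirr : ∀ U : Submodule ℂ (Fin n → ℂ),
      (∀ g, ∀ x ∈ U, ((ρ g : Matrix (Fin n) (Fin n) ℂ)).mulVec x ∈ U) → U = ⊥ ∨ U = ⊤)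
    (a i b j : Fin n) :
    ∑ g : G, (ρ g : Matrix (Fin n) (Fin n) ℂ) a i
        * (ρ g⁻¹ : Matrix (Fin n) (Fin n) ℂ) j b
      = if a = b ∧ i = j then (Fintype.card G : ℂ) / n else 0 := by
  set M : Matrix (Fin n) (Fin n) ℂ :=
    ∑ g : G, (ρ g : Matrix (Fin n) (Fin n) ℂ) * Matrix.single i j (1:ℂ)
      * (ρ g⁻¹ : Matrix (Fin n) (Fin n) ℂ) with hMdef
  obtain ⟨c, hc⟩ := schur_scalar hn ρ hirr M
    (fun g => avg_comm ρ ρ (Matrix.single i j (1:ℂ)) g)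
  have htr : M.trace = (Fintype.card G : ℂ) * (if i = j then 1 else 0) := by
    rw [hMdef, Matrix.trace_sum]
    have : ∀ g : G, ((ρ g : Matrix (Fin n) (Fin n) ℂ) * Matrix.single i j (1:ℂ)
        * (ρ g⁻¹ : Matrix (Fin n) (Fin n) ℂ)).trace = if i = j then 1 else 0 := by
      intro g
      rw [Matrix.trace_mul_comm, ← Matrix.mul_assoc]
      have h1 : (ρ g⁻¹ : Matrix (Fin n) (Fin n) ℂ) * (ρ g : Matrix (Fin n) (Fin n) ℂ) = 1 := by
        rw [← Matrix.UnitaryGroup.mul_val, ← _root_.map_mul, inv_mul_cancel, _root_.map_one]; rfl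
      rw [h1, Matrix.one_mul]
      by_cases h : i = j
      · subst h; simp [Matrix.trace_single_eq_same]
      · simp [Matrix.trace_single_eq_of_ne (c := (1:ℂ)) (h := h), h]
    simp only [this, Finset.sum_const, Finset.card_univ, nsmul_eq_mul]
  have htr2 : M.trace = c * n := by
    simp [hc, Matrix.trace_smul, Matrix.trace_one]
  have hnne : (n : ℂ) ≠ 0 := Nat.cast_ne_zero.mpr hn.ne'
  have hcval : c = (Fintype.card G : ℂ) * (if i = j then 1 else 0) / n := by
    rw [eq_div_iff hnne, ← htr2, htr]
  have hMab : M a b = c * (if a = b then 1 else 0) := by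
    rw [hc]; simp [Matrix.one_apply]
  have hsum : ∑ g : G, (ρ g : Matrix (Fin n) (Fin n) ℂ) a i
      * (ρ g⁻¹ : Matrix (Fin n) (Fin n) ℂ) j b = M a b := by
    rw [hMdef, Matrix.sum_apply]
    simp only [entry_helper]
  rw [hsum, hMab, hcval]
  by_cases h1 : a = b <;> by_cases h2 : i = j <;> simp [h1, h2]

private lemma xi_inner {n m : ℕ} (hm : 1 ≤ m) (hmn : m ≤ n)
    (ε : Fin n → ℂ) (hε : ∀ ι, ‖ε ι‖ = 1)
    (κ1 κ2 : Fin m) :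
    ∑ ι : Fin n,
      (if κ1.1 + 1 = m then
          (if κ1.1 ≤ ι.1 then ((Real.sqrt ((n:ℝ)/((n:ℝ)-(κ1.1:ℝ))) : ℝ) : ℂ) * ε ι else 0)
        else (if ι.1 = κ1.1 then ((Real.sqrt n : ℝ) : ℂ) * ε ι else 0)) *
      (starRingEnd ℂ)
      (if κ2.1 + 1 = m then
          (if κ2.1 ≤ ι.1 then ((Real.sqrt ((n:ℝ)/((n:ℝ)-(κ2.1:ℝ))) : ℝ) : ℂ) * ε ι else 0)
        else (if ι.1 = κ2.1 then ((Real.sqrt n : ℝ) : ℂ) * ε ι else 0))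
    = if κ1 = κ2 then (n : ℂ) else 0 := by
  have hunit : ∀ ι, ε ι * (starRingEnd ℂ) (ε ι) = 1 := by
    intro ι
    rw [Complex.mul_conj, ← Complex.sq_norm, hε]
    norm_num
  have hκ1n : κ1.1 < n := lt_of_lt_of_le κ1.2 hmn
  have hκ2n : κ2.1 < n := lt_of_lt_of_le κ2.2 hmn
  by_cases hl1 : κ1.1 + 1 = m <;> by_cases hl2 : κ2.1 + 1 = m
  · -- both are the last copy: κ1 = κ2
    have hk : κ1 = κ2 := Fin.ext (by omega)
    subst hk
    rw [if_pos rfl]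
    have hd : (0:ℝ) < (n:ℝ) - (κ1.1:ℝ) := by
      have : (κ1.1:ℝ) < (n:ℝ) := by exact_mod_cast hκ1n
      linarith
    have hx : (0:ℝ) ≤ (n:ℝ)/((n:ℝ)-(κ1.1:ℝ)) := div_nonneg (Nat.cast_nonneg n) hd.le
    have hterm : ∀ ι : Fin n,
        (if κ1.1 + 1 = m then
            (if κ1.1 ≤ ι.1 then ((Real.sqrt ((n:ℝ)/((n:ℝ)-(κ1.1:ℝ))) : ℝ) : ℂ) * ε ι else 0)
          else (if ι.1 = κ1.1 then ((Real.sqrt n : ℝ) : ℂ) * ε ι else 0)) *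
        (starRingEnd ℂ)
        (if κ1.1 + 1 = m then
            (if κ1.1 ≤ ι.1 then ((Real.sqrt ((n:ℝ)/((n:ℝ)-(κ1.1:ℝ))) : ℝ) : ℂ) * ε ι else 0)
          else (if ι.1 = κ1.1 then ((Real.sqrt n : ℝ) : ℂ) * ε ι else 0))
        = if κ1.1 ≤ ι.1 then (((n:ℝ)/((n:ℝ)-(κ1.1:ℝ)) : ℝ) : ℂ) else 0 := by
      intro ι
      rw [if_pos hl1]
      by_cases h : κ1.1 ≤ ι.1
      · rw [if_pos h, if_pos h, _root_.map_mul, Complex.conj_ofReal]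
        have : ((Real.sqrt ((n:ℝ)/((n:ℝ)-(κ1.1:ℝ))) : ℝ) : ℂ) *
            ((Real.sqrt ((n:ℝ)/((n:ℝ)-(κ1.1:ℝ))) : ℝ) : ℂ)
            = (((n:ℝ)/((n:ℝ)-(κ1.1:ℝ)) : ℝ) : ℂ) := by
          rw [← Complex.ofReal_mul, Real.mul_self_sqrt hx]
        calc _ = (((Real.sqrt ((n:ℝ)/((n:ℝ)-(κ1.1:ℝ))) : ℝ) : ℂ) *
              ((Real.sqrt ((n:ℝ)/((n:ℝ)-(κ1.1:ℝ))) : ℝ) : ℂ)) * (ε ι * (starRingEnd ℂ) (ε ι)) := by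
              ring
          _ = _ := by rw [this, hunit, mul_one]
      · rw [if_neg h, if_neg h]; simp
    rw [Finset.sum_congr rfl (fun ι _ => hterm ι)]
    rw [Fin.sum_univ_eq_sum_range (fun i => if κ1.1 ≤ i then (((n:ℝ)/((n:ℝ)-(κ1.1:ℝ)) : ℝ) : ℂ) else 0)]
    rw [← Finset.sum_filter]
    have hfil : (Finset.range n).filter (fun i => κ1.1 ≤ i) = Finset.Ico κ1.1 n := by
      ext x; simp [Finset.mem_Ico, and_comm]
    rw [hfil, Finset.sum_const, Nat.card_Ico, nsmul_eq_mul]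
    have hreal : ((n - κ1.1 : ℕ) : ℝ) * ((n:ℝ)/((n:ℝ)-(κ1.1:ℝ))) = (n : ℝ) := by
      rw [Nat.cast_sub hκ1n.le]
      field_simp
    calc ((n - κ1.1 : ℕ) : ℂ) * (((n:ℝ)/((n:ℝ)-(κ1.1:ℝ)) : ℝ) : ℂ)
        = ((((n - κ1.1 : ℕ) : ℝ) * ((n:ℝ)/((n:ℝ)-(κ1.1:ℝ))) : ℝ) : ℂ) := by push_cast; ring
      _ = (n : ℂ) := by rw [hreal]; norm_cast
  · -- κ1 last, κ2 not
    have hne : κ1 ≠ κ2 := fun h => hl2 (h ▸ hl1)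
    rw [if_neg hne]
    refine Finset.sum_eq_zero fun ι _ => ?_
    rw [if_pos hl1, if_neg hl2]
    by_cases h2 : ι.1 = κ2.1
    · have : ¬ κ1.1 ≤ ι.1 := by omega
      rw [if_neg this, zero_mul]
    · rw [if_neg h2, map_zero, mul_zero]
  · -- κ2 last, κ1 not
    have hne : κ1 ≠ κ2 := fun h => hl1 (h ▸ hl2)
    rw [if_neg hne]
    refine Finset.sum_eq_zero fun ι _ => ?_
    rw [if_neg hl1, if_pos hl2]
    by_cases h1 : ι.1 = κ1.1
    · have : ¬ κ2.1 ≤ ι.1 := by omega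
      rw [if_neg this]; simp
    · rw [if_neg h1, zero_mul]
  · -- neither last
    by_cases hk : κ1 = κ2
    · subst hk
      rw [if_pos rfl]
      have hterm : ∀ ι : Fin n,
          (if κ1.1 + 1 = m then
              (if κ1.1 ≤ ι.1 then ((Real.sqrt ((n:ℝ)/((n:ℝ)-(κ1.1:ℝ))) : ℝ) : ℂ) * ε ι else 0)
            else (if ι.1 = κ1.1 then ((Real.sqrt n : ℝ) : ℂ) * ε ι else 0)) *
          (starRingEnd ℂ)
          (if κ1.1 + 1 = m then
              (if κ1.1 ≤ ι.1 then ((Real.sqrt ((n:ℝ)/((n:ℝ)-(κ1.1:ℝ))) : ℝ) : ℂ) * ε ι else 0)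
            else (if ι.1 = κ1.1 then ((Real.sqrt n : ℝ) : ℂ) * ε ι else 0))
          = if ι = (⟨κ1.1, hκ1n⟩ : Fin n) then (n : ℂ) else 0 := by
        intro ι
        rw [if_neg hl1]
        have hiff : ι.1 = κ1.1 ↔ ι = (⟨κ1.1, hκ1n⟩ : Fin n) := by
          rw [Fin.ext_iff]
        by_cases h : ι.1 = κ1.1
        · rw [if_pos h, if_pos (hiff.mp h), _root_.map_mul, Complex.conj_ofReal]
          have : ((Real.sqrt n : ℝ) : ℂ) * ((Real.sqrt n : ℝ) : ℂ) = (n : ℂ) := by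
            rw [← Complex.ofReal_mul, Real.mul_self_sqrt (Nat.cast_nonneg n)]
            norm_cast
          calc _ = (((Real.sqrt n : ℝ) : ℂ) * ((Real.sqrt n : ℝ) : ℂ)) *
                (ε ι * (starRingEnd ℂ) (ε ι)) := by ring
            _ = _ := by rw [this, hunit, mul_one]
        · rw [if_neg h, if_neg (fun hh => h (hiff.mpr hh))]; simp
      rw [Finset.sum_congr rfl (fun ι _ => hterm ι), Finset.sum_ite_eq']
      simp
    · rw [if_neg hk]
      have hvne : κ1.1 ≠ κ2.1 := fun h => hk (Fin.ext h)
      refine Finset.sum_eq_zero fun ι _ => ?_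
      rw [if_neg hl1, if_neg hl2]
      by_cases h1 : ι.1 = κ1.1
      · have h2 : ¬ ι.1 = κ2.1 := by omega
        rw [if_neg h2, map_zero, mul_zero]
      · rw [if_neg h1, zero_mul]

/-- Let `π` be a block-diagonal unitary subrepresentation of the left
regular representation of a finite group `G`, with irreducible pairwise-inequivalent
blocks `ρ τ` of dimension `d τ` occurring with multiplicity `mult τ ≤ d τ`.  Coordinates
of `ℂⁿ` are indexed by triples `(τ, κ, ι)`.  Let `ξ` be built blockwise from complex
units `ε τ ι`: for `κ + 1 < mult τ + 1` (i.e. `κ` not the last copy),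
`ξ^{τ,κ} = √(d τ)·ε_{τ,κ}·e_κ`, and for the last copy `κ`,
`ξ^{τ,κ} = √(d τ/(d τ − κ))·∑_{ι ≥ κ} ε_{τ,ι}·e_ι` (0-indexed `κ`, matching the paper's
1-indexed formulas).  Then the rows of `(1/√|G|)(π(g)ξ)_{g∈G}` are orthonormal:
`(1/|G|) ∑_{g∈G} (π(g)ξ)_a · conj((π(g)ξ)_b) = δ_{ab}`. -/
theorem stmt_16 {G : Type*} [Group G] [Fintype G]
    {T : ℕ} (d mult : Fin T → ℕ)
    (hmd : ∀ τ, 1 ≤ mult τ ∧ mult τ ≤ d τ)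
    (ρ : (τ : Fin T) → G →* Matrix.unitaryGroup (Fin (d τ)) ℂ)
    -- each block is irreducible
    (hirr : ∀ τ, ∀ U : Submodule ℂ (Fin (d τ) → ℂ),
      (∀ g, ∀ x ∈ U, ((ρ τ g : Matrix (Fin (d τ)) (Fin (d τ)) ℂ)).mulVec x ∈ U) →
      U = ⊥ ∨ U = ⊤)
    -- distinct blocks are inequivalent (no nonzero intertwiner)
    (hineq : ∀ τ τ', τ ≠ τ' →
      ¬∃ M : Matrix (Fin (d τ)) (Fin (d τ')) ℂ, M ≠ 0 ∧
        ∀ g, (ρ τ g : Matrix (Fin (d τ)) (Fin (d τ)) ℂ) * M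
            = M * (ρ τ' g : Matrix (Fin (d τ')) (Fin (d τ')) ℂ))
    (ε : (τ : Fin T) → Fin (d τ) → ℂ) (hε : ∀ τ ι, ‖ε τ ι‖ = 1)
    (ξ : ((τ : Fin T) × (Fin (mult τ) × Fin (d τ))) → ℂ)
    (hξ : ∀ (τ : Fin T) (κ : Fin (mult τ)) (ι : Fin (d τ)),
      ξ ⟨τ, (κ, ι)⟩ =
        if κ.1 + 1 = mult τ then
          (if κ.1 ≤ ι.1 then
            ((Real.sqrt ((d τ : ℝ) / ((d τ : ℝ) - (κ.1 : ℝ))) : ℝ) : ℂ) * ε τ ι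
          else 0)
        else
          (if ι.1 = κ.1 then ((Real.sqrt (d τ) : ℝ) : ℂ) * ε τ ι else 0)) :
    ∀ a b : ((τ : Fin T) × (Fin (mult τ) × Fin (d τ))),
      (1 / (Fintype.card G : ℂ)) * ∑ g : G,
          (∑ ι', (ρ a.1 g : Matrix (Fin (d a.1)) (Fin (d a.1)) ℂ) a.2.2 ι' *
              ξ ⟨a.1, (a.2.1, ι')⟩) *
          (starRingEnd ℂ) (∑ ι', (ρ b.1 g : Matrix (Fin (d b.1)) (Fin (d b.1)) ℂ) b.2.2 ι' *
              ξ ⟨b.1, (b.2.1, ι')⟩)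
        = if a = b then 1 else 0 := by
  rintro ⟨τa, κa, ia⟩ ⟨τb, κb, ib⟩
  have hG : (Fintype.card G : ℂ) ≠ 0 := Nat.cast_ne_zero.mpr Fintype.card_ne_zero
  have key : ∀ g : G,
      (∑ ι', (ρ τa g : Matrix (Fin (d τa)) (Fin (d τa)) ℂ) ia ι' * ξ ⟨τa, (κa, ι')⟩) *
      (starRingEnd ℂ) (∑ ι', (ρ τb g : Matrix (Fin (d τb)) (Fin (d τb)) ℂ) ib ι' * ξ ⟨τb, (κb, ι')⟩)
      = ∑ ι' : Fin (d τa), ∑ ι'' : Fin (d τb),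
          (ξ ⟨τa, (κa, ι')⟩ * (starRingEnd ℂ) (ξ ⟨τb, (κb, ι'')⟩)) *
          ((ρ τa g : Matrix (Fin (d τa)) (Fin (d τa)) ℂ) ia ι' *
            (ρ τb g⁻¹ : Matrix (Fin (d τb)) (Fin (d τb)) ℂ) ι'' ib) := by
    intro g
    rw [map_sum, Finset.sum_mul_sum]
    refine Finset.sum_congr rfl fun ι' _ => Finset.sum_congr rfl fun ι'' _ => ?_
    rw [_root_.map_mul, conj_entry]
    ring
  have hswap : ∑ g : G, ∑ ι' : Fin (d τa), ∑ ι'' : Fin (d τb),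
      (ξ ⟨τa, (κa, ι')⟩ * (starRingEnd ℂ) (ξ ⟨τb, (κb, ι'')⟩)) *
        ((ρ τa g : Matrix (Fin (d τa)) (Fin (d τa)) ℂ) ia ι' *
          (ρ τb g⁻¹ : Matrix (Fin (d τb)) (Fin (d τb)) ℂ) ι'' ib)
      = ∑ ι' : Fin (d τa), ∑ ι'' : Fin (d τb),
        (ξ ⟨τa, (κa, ι')⟩ * (starRingEnd ℂ) (ξ ⟨τb, (κb, ι'')⟩)) *
          ∑ g : G, (ρ τa g : Matrix (Fin (d τa)) (Fin (d τa)) ℂ) ia ι' *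
            (ρ τb g⁻¹ : Matrix (Fin (d τb)) (Fin (d τb)) ℂ) ι'' ib := by
    rw [Finset.sum_comm]
    refine Finset.sum_congr rfl fun ι' _ => ?_
    rw [Finset.sum_comm]
    refine Finset.sum_congr rfl fun ι'' _ => ?_
    rw [← Finset.mul_sum]
  rw [Finset.sum_congr rfl (fun g _ => key g), hswap]
  by_cases hττ : τa = τb
  · subst hττ
    have hd0 : 0 < d τa := lt_of_lt_of_le (hmd τa).1 (hmd τa).2
    have hdC : (d τa : ℂ) ≠ 0 := Nat.cast_ne_zero.mpr hd0.ne'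
    simp only [ortho_eq hd0 (ρ τa) (hirr τa) ia _ ib]
    by_cases hia : ia = ib
    · subst hia
      simp only [eq_self_iff_true, true_and]
      have inner : ∀ ι' : Fin (d τa),
          ∑ ι'' : Fin (d τa), (ξ ⟨τa, (κa, ι')⟩ * (starRingEnd ℂ) (ξ ⟨τa, (κb, ι'')⟩)) *
            (if ι' = ι'' then (Fintype.card G : ℂ) / (d τa) else 0)
          = (ξ ⟨τa, (κa, ι')⟩ * (starRingEnd ℂ) (ξ ⟨τa, (κb, ι')⟩)) *
            ((Fintype.card G : ℂ) / (d τa)) := by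
        intro ι'
        rw [Finset.sum_eq_single ι']
        · rw [if_pos rfl]
        · intro x _ hx
          rw [if_neg (Ne.symm hx), mul_zero]
        · intro hx
          exact absurd (Finset.mem_univ ι') hx
      rw [Finset.sum_congr rfl (fun ι' _ => inner ι'), ← Finset.sum_mul]
      have hxi : ∑ ι' : Fin (d τa), ξ ⟨τa, (κa, ι')⟩ * (starRingEnd ℂ) (ξ ⟨τa, (κb, ι')⟩)
          = if κa = κb then (d τa : ℂ) else 0 := by
        have := xi_inner (hmd τa).1 (hmd τa).2 (ε τa) (hε τa) κa κb
        rw [← this]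
        exact Finset.sum_congr rfl fun ι' _ => by rw [hξ τa κa ι', hξ τa κb ι']
      rw [hxi]
      by_cases hκ : κa = κb
      · subst hκ
        rw [if_pos rfl, if_pos rfl]
        field_simp
      · rw [if_neg hκ, zero_mul, mul_zero, if_neg (by simp [hκ])]
    · have hab : (⟨τa, (κa, ia)⟩ : (τ : Fin T) × (Fin (mult τ) × Fin (d τ)))
          ≠ ⟨τa, (κb, ib)⟩ := by simp [hia]
      rw [if_neg hab]
      have : ∀ ι' : Fin (d τa),
          (∑ ι'' : Fin (d τa), (ξ ⟨τa, (κa, ι')⟩ * (starRingEnd ℂ) (ξ ⟨τa, (κb, ι'')⟩)) *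
            (if ia = ib ∧ ι' = ι'' then (Fintype.card G : ℂ) / (d τa) else 0)) = 0 := by
        intro ι'
        refine Finset.sum_eq_zero fun ι'' _ => ?_
        rw [if_neg (fun h => hia h.1), mul_zero]
      rw [Finset.sum_congr rfl (fun ι' _ => this ι'), Finset.sum_const, smul_zero, mul_zero]
  · have hab : (⟨τa, (κa, ia)⟩ : (τ : Fin T) × (Fin (mult τ) × Fin (d τ)))
        ≠ ⟨τb, (κb, ib)⟩ := by simp [hττ]
    rw [if_neg hab]
    have hz : ∀ (ι' : Fin (d τa)) (ι'' : Fin (d τb)),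
        ∑ g : G, (ρ τa g : Matrix (Fin (d τa)) (Fin (d τa)) ℂ) ia ι' *
          (ρ τb g⁻¹ : Matrix (Fin (d τb)) (Fin (d τb)) ℂ) ι'' ib = 0 :=
      fun ι' ι'' => ortho_ne (ρ τa) (ρ τb) (hineq τa τb hττ) ia ι' ib ι''
    simp only [hz, mul_zero, Finset.sum_const, smul_zero]
end
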